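/- arXiv:1510.07982 — 2 statements merged into one kernel-verified Lean document; each statement's English description precedes it below -/
import Mathlib

section
/- Let G be a graph of order n ≥ 2 with vertex set V = {1,…,n}, let {x,y} be an edge of G and let t ≥ 2 be an integer. Then the number of copies of {x,y} in S(G,t) whose x-endpoint has degree d(x)+1 and whose y-endpoint has degree d(y) is f_{S(G,t)}(d(x)+1,d(y)) = n^{t−2}·(d(x) − τ(x,y)) − ψ(t−2)·d(y). -/
open Finset

/-- The generalized Sierpiński graph `S(G,t)` on words of length `t` over the vertex set. -/
def sierpinskiGraph {V : Type*} (G : SimpleGraph V) (t : ℕ) :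
    SimpleGraph (Fin t → V) where
  Adj u v := ∃ i : Fin t, (∀ j, j < i → u j = v j) ∧ u i ≠ v i ∧ G.Adj (u i) (v i) ∧
      ∀ j, i < j → u j = v i ∧ v j = u i
  symm := by
    constructor
    rintro u v ⟨i, h1, h2, h3, h4⟩
    exact ⟨i, fun j hj => (h1 j hj).symm, fun h => h2 h.symm, h3.symm,
      fun j hj => ⟨(h4 j hj).2, (h4 j hj).1⟩⟩
  loopless := by
    constructor
    rintro u ⟨i, _, h2, _⟩
    exact h2 rfl

instance {V : Type*} [Fintype V] [DecidableEq V] (G : SimpleGraph V) [DecidableRel G.Adj]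
    (t : ℕ) : DecidableRel (sierpinskiGraph G t).Adj := fun u v =>
  inferInstanceAs (Decidable (∃ i : Fin t, (∀ j, j < i → u j = v j) ∧ u i ≠ v i ∧
    G.Adj (u i) (v i) ∧ ∀ j, i < j → u j = v i ∧ v j = u i))

/-- The general Randić index `R_α`. -/
noncomputable def randic {V : Type*} [Fintype V] (G : SimpleGraph V) (α : ℝ) : ℝ := by
  classical
  exact ∑ e ∈ G.edgeFinset,
    Sym2.lift ⟨fun u v => ((G.degree u : ℝ) * (G.degree v : ℝ)) ^ α,
      fun u v => by dsimp only; rw [mul_comm]⟩ e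

/-- `τ(x,y)`: the number of triangles containing the adjacent vertices `x` and `y`. -/
def tau {V : Type*} [Fintype V] [DecidableEq V] (G : SimpleGraph V) [DecidableRel G.Adj]
    (x y : V) : ℕ := (G.neighborFinset x ∩ G.neighborFinset y).card

lemma tau_comm {V : Type*} [Fintype V] [DecidableEq V] (G : SimpleGraph V) [DecidableRel G.Adj]
    (x y : V) : tau G x y = tau G y x := by
  simp [tau, Finset.inter_comm]

/-- `ψ(t) = 1 + n + ⋯ + n^{t-1}`. -/
def psi (n t : ℕ) : ℕ := ∑ i ∈ Finset.range t, n ^ i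

/-- `τ(G)`: the number of triangles of `G`. -/
noncomputable def triangleCount {V : Type*} [Fintype V] (G : SimpleGraph V) : ℕ := by
  classical exact (G.cliqueFinset 3).card

/-- `u` is the `x`-endpoint and `v` the `y`-endpoint of a copy of the edge `{x,y}` in `S(G,t)`. -/
def isCopy {V : Type*} {t : ℕ} (x y : V) (u v : Fin t → V) : Prop :=
  ∃ i : Fin t, (∀ j, j < i → u j = v j) ∧ u i = x ∧ v i = y ∧ ∀ j, i < j → u j = y ∧ v j = x

instance {V : Type*} [DecidableEq V] {t : ℕ} (x y : V) (u v : Fin t → V) :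
    Decidable (isCopy x y u v) :=
  inferInstanceAs (Decidable (∃ i : Fin t, (∀ j, j < i → u j = v j) ∧ u i = x ∧ v i = y ∧
    ∀ j, i < j → u j = y ∧ v j = x))

/-- `f_{S(G,t)}(a,b)`: the number of copies of the edge `{x,y}` of `G` in `S(G,t)` whose
`x`-endpoint has degree `a` and whose `y`-endpoint has degree `b` in `S(G,t)`. -/
def copyCount {V : Type*} [Fintype V] [DecidableEq V] (G : SimpleGraph V) [DecidableRel G.Adj]
    (t : ℕ) (x y : V) (a b : ℕ) : ℕ :=
  (Finset.univ.filter fun p : (Fin t → V) × (Fin t → V) =>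
    isCopy x y p.1 p.2 ∧ (sierpinskiGraph G t).degree p.1 = a ∧
      (sierpinskiGraph G t).degree p.2 = b).card

set_option linter.unusedSectionVars false

section AuxDev

variable {V : Type*} [Fintype V] [DecidableEq V] (G : SimpleGraph V) [DecidableRel G.Adj]

lemma wit_unique {k : ℕ} {w : Fin k → V} {x : V} {i i' : Fin k}
    (h : (∀ j, i < j → w j = x) ∧ G.Adj (w i) x)
    (h' : (∀ j, i' < j → w j = x) ∧ G.Adj (w i') x) : i = i' := by
  rcases lt_trichotomy i i' with hlt | heq | hlt
  · exact absurd (h.1 i' hlt) h'.2.ne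
  · exact heq
  · exact absurd (h'.1 i hlt) h.2.ne

/-- explicit neighbor in the Sierpinski graph -/
def nbr {V : Type*} {t : ℕ} (u : Fin t → V) (i : Fin t) (c : V) : Fin t → V :=
  fun j => if j < i then u j else if j = i then c else u i

lemma sier_neighborFinset_eq {t : ℕ} (u : Fin t → V) :
    (sierpinskiGraph G t).neighborFinset u =
      (univ.filter fun p : Fin t × V =>
        (∀ j, p.1 < j → u j = p.2) ∧ G.Adj (u p.1) p.2).image fun p => nbr u p.1 p.2 := by
  ext v
  simp only [SimpleGraph.mem_neighborFinset, mem_image, mem_filter, mem_univ, true_and,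
    Prod.exists]
  constructor
  · rintro ⟨i, h1, h2, h3, h4⟩
    refine ⟨i, v i, ⟨fun j hj => (h4 j hj).1, h3⟩, ?_⟩
    funext j
    rcases lt_trichotomy j i with h | h | h
    · simpa [nbr, h] using h1 j h
    · subst h; simp [nbr]
    · simpa [nbr, Fin.lt_asymm h, Fin.ne_of_gt h] using (h4 j h).2.symm
  · rintro ⟨i, c, ⟨hsuf, hadj⟩, rfl⟩
    refine ⟨i, fun j hj => by simp [nbr, hj], by simp [nbr]; exact hadj.ne,
      by simpa [nbr] using hadj, fun j hj => ?_⟩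
    constructor
    · simpa [nbr] using hsuf j hj
    · simp [nbr, Fin.lt_asymm hj, Fin.ne_of_gt hj]

lemma sier_degree {m : ℕ} (u : Fin (m + 2) → V) :
    (sierpinskiGraph G (m + 2)).degree u = G.degree (u (Fin.last (m + 1))) +
      if (∃ i : Fin (m + 1), (∀ j, i.castSucc < j → u j = u (Fin.last (m + 1))) ∧
          G.Adj (u i.castSucc) (u (Fin.last (m + 1)))) then 1 else 0 := by
  classical
  have hinj : Set.InjOn (fun p : Fin (m + 2) × V => nbr u p.1 p.2)
      (univ.filter fun p : Fin (m + 2) × V =>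
        (∀ j, p.1 < j → u j = p.2) ∧ G.Adj (u p.1) p.2) := by
    rintro ⟨i, c⟩ hic ⟨i', c'⟩ hic' heq
    simp only [coe_filter, mem_univ, true_and, Set.mem_setOf_eq] at hic hic'
    have key : ∀ (a b : Fin (m + 2)) (d d' : V), G.Adj (u a) d →
        nbr u a d = nbr u b d' → ¬a < b := by
      intro a b d d' hadj heq hab
      have h := congrFun heq a
      simp only [nbr, lt_irrefl, if_false, if_pos rfl, if_pos hab, if_neg (lt_irrefl a)] at h
      exact hadj.ne h.symm
    have h1 : i = i' := le_antisymm
      (not_lt.mp (key i' i c' c hic'.2 heq.symm)) (not_lt.mp (key i i' c c' hic.2 heq))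
    subst h1
    have h := congrFun heq i
    simp only [nbr, lt_irrefl, if_false, if_pos rfl, if_neg (lt_irrefl i)] at h
    exact Prod.ext rfl h
  rw [SimpleGraph.degree, sier_neighborFinset_eq, card_image_of_injOn hinj]
  have hsplit : (univ.filter fun p : Fin (m + 2) × V =>
        (∀ j, p.1 < j → u j = p.2) ∧ G.Adj (u p.1) p.2)
      = ((G.neighborFinset (u (Fin.last (m + 1)))).image fun c => (Fin.last (m + 1), c)) ∪
        ((univ.filter fun i : Fin (m + 1) =>
            (∀ j, i.castSucc < j → u j = u (Fin.last (m + 1))) ∧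
            G.Adj (u i.castSucc) (u (Fin.last (m + 1)))).image
          fun i => (i.castSucc, u (Fin.last (m + 1)))) := by
    ext ⟨i, c⟩
    simp only [mem_filter, mem_univ, true_and, mem_union, mem_image,
      SimpleGraph.mem_neighborFinset, Prod.mk.injEq]
    constructor
    · rintro ⟨hsuf, hadj⟩
      rcases eq_or_ne i (Fin.last (m + 1)) with rfl | hne
      · exact Or.inl ⟨c, hadj, rfl, rfl⟩
      · obtain ⟨i₀, rfl⟩ := Fin.exists_castSucc_eq.mpr hne
        have hc : c = u (Fin.last (m + 1)) := (hsuf _ (Fin.castSucc_lt_last i₀)).symm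
        subst hc
        exact Or.inr ⟨i₀, ⟨hsuf, hadj⟩, rfl, rfl⟩
    · rintro (⟨c', hadj, rfl, rfl⟩ | ⟨i₀, ⟨hsuf, hadj⟩, rfl, rfl⟩)
      · exact ⟨fun j hj => absurd hj (not_lt.mpr (Fin.le_last j)), hadj⟩
      · exact ⟨hsuf, hadj⟩
  rw [hsplit, card_union_of_disjoint, card_image_of_injective _ (fun c c' h => by
      simpa using h), card_image_of_injective _ (fun a b h =>
      Fin.castSucc_injective _ (congrArg Prod.fst h))]
  · congr 1
    split_ifs with hE
    · obtain ⟨i, hi⟩ := hE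
      rw [card_eq_one]
      refine ⟨i, ?_⟩
      ext i'
      simp only [mem_filter, mem_univ, true_and, mem_singleton]
      constructor
      · intro hi'
        have := wit_unique G (w := u) (x := u (Fin.last (m + 1)))
          ⟨hi'.1, hi'.2⟩ ⟨hi.1, hi.2⟩
        exact Fin.castSucc_injective _ this
      · rintro rfl; exact hi
    · rw [card_eq_zero, filter_eq_empty_iff]
      intro i _
      exact fun hi => hE ⟨i, hi⟩
  · rw [Finset.disjoint_left]
    rintro p hp hp'
    simp only [mem_image, SimpleGraph.mem_neighborFinset, mem_filter, mem_univ,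
      true_and] at hp hp'
    obtain ⟨c, -, rfl⟩ := hp
    obtain ⟨i₀, -, h⟩ := hp'
    exact absurd (congrArg Prod.fst h) (Fin.castSucc_lt_last i₀).ne

lemma exists_snoc {m : ℕ} (w : Fin (m + 1) → V) (c : V) :
    (∃ i : Fin (m + 1),
        (∀ j, i.castSucc < j → (Fin.snoc w c : Fin (m + 2) → V) j = c) ∧
        G.Adj ((Fin.snoc w c : Fin (m + 2) → V) i.castSucc) c) ↔
      ∃ i : Fin (m + 1), (∀ j, i < j → w j = c) ∧ G.Adj (w i) c := by
  simp only [Fin.snoc_castSucc]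
  constructor
  · rintro ⟨i, h1, h2⟩
    refine ⟨i, fun j hj => ?_, h2⟩
    have := h1 j.castSucc (Fin.castSucc_lt_castSucc_iff.mpr hj)
    simpa using this
  · rintro ⟨i, h1, h2⟩
    refine ⟨i, fun j hj => ?_, h2⟩
    rcases eq_or_ne j (Fin.last (m + 1)) with rfl | hne
    · simp
    · obtain ⟨j₀, rfl⟩ := Fin.exists_castSucc_eq.mpr hne
      rw [Fin.snoc_castSucc]
      exact h1 j₀ (Fin.castSucc_lt_castSucc_iff.mp hj)

lemma copyCount_eq {m : ℕ} (x y : V) (hxy : G.Adj x y) :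
    copyCount G (m + 2) x y (G.degree x + 1) (G.degree y) =
      (univ.filter fun w : Fin (m + 1) → V =>
        (∃ i, (∀ j, i < j → w j = x) ∧ G.Adj (w i) x) ∧
        ¬∃ i, (∀ j, i < j → w j = y) ∧ G.Adj (w i) y).card := by
  have hsnoc_inj : ∀ a : V, Function.Injective
      fun w : Fin (m + 1) → V => (Fin.snoc w a : Fin (m + 2) → V) := by
    intro a w w' h
    funext j
    simpa using congrFun (h : (Fin.snoc w a : Fin (m + 2) → V) = Fin.snoc w' a) j.castSucc
  rw [copyCount]
  have himg : (Finset.univ.filter fun p : (Fin (m + 2) → V) × (Fin (m + 2) → V) =>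
      isCopy x y p.1 p.2 ∧ (sierpinskiGraph G (m + 2)).degree p.1 = G.degree x + 1 ∧
        (sierpinskiGraph G (m + 2)).degree p.2 = G.degree y) =
      ((univ.filter fun w : Fin (m + 1) → V =>
        (∃ i, (∀ j, i < j → w j = x) ∧ G.Adj (w i) x) ∧
        ¬∃ i, (∀ j, i < j → w j = y) ∧ G.Adj (w i) y).image
        fun w => (Fin.snoc w x, Fin.snoc w y)) := by
    ext ⟨u, v⟩
    simp only [mem_filter, mem_univ, true_and, mem_image, Prod.mk.injEq]
    constructor
    · rintro ⟨⟨i, h1, h2, h3, h4⟩, hdu, hdv⟩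
      rcases eq_or_ne i (Fin.last (m + 1)) with rfl | hne
      · -- pivot is the last index
        have hu : Fin.snoc (Fin.init u) x = u := by
          rw [← h2]; exact Fin.snoc_init_self u
        have hiv : Fin.init v = Fin.init u := by
          funext j
          exact (h1 j.castSucc (Fin.castSucc_lt_last j)).symm
        have hv : Fin.snoc (Fin.init u) y = v := by
          rw [← h3, ← hiv]; exact Fin.snoc_init_self v
        refine ⟨Fin.init u, ⟨?_, ?_⟩, hu, hv⟩
        · rw [← hu, sier_degree, Fin.snoc_last] at hdu
          simp only [exists_snoc] at hdu
          by_contra hc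
          rw [if_neg hc] at hdu
          omega
        · rw [← hv, sier_degree, Fin.snoc_last] at hdv
          simp only [exists_snoc] at hdv
          intro hc
          rw [if_pos hc] at hdv
          omega
      · -- pivot before the last index: contradiction with degrees
        exfalso
        have hil : i < Fin.last (m + 1) := Fin.lt_last_iff_ne_last.mpr hne
        have hout := h4 (Fin.last (m + 1)) hil
        obtain ⟨i₀, rfl⟩ := Fin.exists_castSucc_eq.mpr hne
        have hEu : ∃ i' : Fin (m + 1),
            (∀ j, i'.castSucc < j → u j = u (Fin.last (m + 1))) ∧
            G.Adj (u i'.castSucc) (u (Fin.last (m + 1))) :=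
          ⟨i₀, fun j hj => by rw [(h4 j hj).1, hout.1],
            by rw [h2, hout.1]; exact hxy⟩
        have hEv : ∃ i' : Fin (m + 1),
            (∀ j, i'.castSucc < j → v j = v (Fin.last (m + 1))) ∧
            G.Adj (v i'.castSucc) (v (Fin.last (m + 1))) :=
          ⟨i₀, fun j hj => by rw [(h4 j hj).2, hout.2],
            by rw [h3, hout.2]; exact hxy.symm⟩
        rw [sier_degree, if_pos hEu, hout.1] at hdu
        rw [sier_degree, if_pos hEv, hout.2] at hdv
        omega
    · rintro ⟨w, ⟨hPx, hPy⟩, rfl, rfl⟩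
      refine ⟨⟨Fin.last (m + 1), fun j hj => ?_, by simp, by simp, fun j hj =>
        absurd hj (not_lt.mpr (Fin.le_last j))⟩, ?_, ?_⟩
      · obtain ⟨j₀, rfl⟩ := Fin.exists_castSucc_eq.mpr (Fin.ne_last_of_lt hj)
        simp
      · rw [sier_degree, Fin.snoc_last]
        simp only [exists_snoc]
        rw [if_pos hPx]
      · rw [sier_degree, Fin.snoc_last]
        simp only [exists_snoc]
        rw [if_neg hPy, add_zero]
  rw [himg, card_image_of_injective _ (fun w w' h =>
    hsnoc_inj x (congrArg Prod.fst h))]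

lemma mem_cyl {k : ℕ} (x : V) (s : Finset V) (i : Fin k) (w : Fin k → V) :
    (w ∈ Fintype.piFinset fun j =>
        if j < i then (univ : Finset V) else if j = i then s else {x}) ↔
      (∀ j, i < j → w j = x) ∧ w i ∈ s := by
  rw [Fintype.mem_piFinset]
  constructor
  · intro h
    refine ⟨fun j hj => ?_, ?_⟩
    · have := h j
      rw [if_neg (Fin.lt_asymm hj), if_neg (Fin.ne_of_gt hj)] at this
      exact mem_singleton.mp this
    · simpa using h i
  · rintro ⟨h1, h2⟩ j
    rcases lt_trichotomy j i with h | h | h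
    · simp [h]
    · subst h; simpa using h2
    · rw [if_neg (Fin.lt_asymm h), if_neg (Fin.ne_of_gt h)]
      exact mem_singleton.mpr (h1 j h)

lemma card_cyl {k : ℕ} (x : V) (s : Finset V) (i : Fin k) :
    (Fintype.piFinset fun j =>
        if j < i then (univ : Finset V) else if j = i then s else {x}).card
      = s.card * Fintype.card V ^ (i : ℕ) := by
  rw [Fintype.card_piFinset]
  rw [← Finset.prod_filter_mul_prod_filter_not univ (· < i)]
  have h1 : ∏ j ∈ univ.filter (· < i),
      (if j < i then (univ : Finset V) else if j = i then s else {x}).card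
      = Fintype.card V ^ (i : ℕ) := by
    rw [Finset.prod_congr rfl (fun j hj => by
      rw [if_pos (mem_filter.mp hj).2, card_univ]), Finset.prod_const]
    congr 1
    have : univ.filter (· < i) = Finset.Iio i := by ext j; simp
    rw [this, Fin.card_Iio]
  have h2 : ∏ j ∈ univ.filter (fun j => ¬j < i),
      (if j < i then (univ : Finset V) else if j = i then s else {x}).card = s.card := by
    rw [Finset.prod_eq_single_of_mem i (by simp)]
    · simp
    · intro j hj hne
      rw [if_neg (mem_filter.mp hj).2, if_neg hne, card_singleton]
  rw [h1, h2, mul_comm]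

lemma card_filter_exists {k : ℕ} (x : V) :
    (univ.filter fun w : Fin k → V =>
        ∃ i, (∀ j, i < j → w j = x) ∧ G.Adj (w i) x).card
      = G.degree x * psi (Fintype.card V) k := by
  have hU : (univ.filter fun w : Fin k → V =>
        ∃ i, (∀ j, i < j → w j = x) ∧ G.Adj (w i) x)
      = univ.biUnion fun i : Fin k => Fintype.piFinset fun j =>
          if j < i then (univ : Finset V) else if j = i then G.neighborFinset x else {x} := by
    ext w
    simp only [mem_filter, mem_univ, true_and, mem_biUnion, mem_cyl,
      SimpleGraph.mem_neighborFinset]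
    constructor
    · rintro ⟨i, h1, h2⟩
      exact ⟨i, h1, h2.symm⟩
    · rintro ⟨i, h1, h2⟩
      exact ⟨i, h1, h2.symm⟩
  rw [hU, card_biUnion]
  · simp only [card_cyl, SimpleGraph.card_neighborFinset_eq_degree]
    rw [Fin.sum_univ_eq_sum_range fun i => G.degree x * Fintype.card V ^ i, ← mul_sum]
    rfl
  · intro i _ i' _ hne
    rw [Function.onFun_apply, Finset.disjoint_left]
    intro w hw hw'
    rw [mem_cyl, SimpleGraph.mem_neighborFinset] at hw hw'
    exact hne (wit_unique G ⟨hw.1, hw.2.symm⟩ ⟨hw'.1, hw'.2.symm⟩)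

lemma mem_lastCyl {k : ℕ} (s : Finset V) (w : Fin (k + 1) → V) :
    (w ∈ Fintype.piFinset fun j : Fin (k + 1) =>
        if j = Fin.last k then s else (univ : Finset V)) ↔ w (Fin.last k) ∈ s := by
  rw [Fintype.mem_piFinset]
  constructor
  · intro h; simpa using h (Fin.last k)
  · intro h j
    rcases eq_or_ne j (Fin.last k) with rfl | hne
    · simpa using h
    · simp [hne]

lemma card_lastCyl {k : ℕ} (s : Finset V) :
    (Fintype.piFinset fun j : Fin (k + 1) =>
        if j = Fin.last k then s else (univ : Finset V)).card
      = s.card * Fintype.card V ^ k := by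
  rw [Fintype.card_piFinset, ← Finset.mul_prod_erase univ _ (mem_univ (Fin.last k)),
    if_pos rfl]
  congr 1
  rw [Finset.prod_congr rfl (fun j hj => by
    rw [if_neg (mem_erase.mp hj).1, card_univ]), Finset.prod_const]
  congr 1
  rw [card_erase_of_mem (mem_univ _), card_univ, Fintype.card_fin]
  omega

lemma card_filter_both {m : ℕ} (x y : V) (hxy : G.Adj x y) :
    (univ.filter fun w : Fin (m + 1) → V =>
        (∃ i, (∀ j, i < j → w j = x) ∧ G.Adj (w i) x) ∧
        (∃ i, (∀ j, i < j → w j = y) ∧ G.Adj (w i) y)).card =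
      tau G x y * Fintype.card V ^ m +
        (G.degree x * psi (Fintype.card V) m + G.degree y * psi (Fintype.card V) m) := by
  classical
  set A : Finset (Fin (m + 1) → V) := Fintype.piFinset fun j : Fin (m + 1) =>
    if j = Fin.last m then G.neighborFinset x ∩ G.neighborFinset y else (univ : Finset V)
    with hA
  set B : Fin m → Finset (Fin (m + 1) → V) := fun i => Fintype.piFinset fun j =>
    if j < i.castSucc then (univ : Finset V)
    else if j = i.castSucc then G.neighborFinset x else {x} with hB
  set C : Fin m → Finset (Fin (m + 1) → V) := fun i => Fintype.piFinset fun j =>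
    if j < i.castSucc then (univ : Finset V)
    else if j = i.castSucc then G.neighborFinset y else {y} with hC
  have hmemA : ∀ w : Fin (m + 1) → V,
      w ∈ A ↔ G.Adj x (w (Fin.last m)) ∧ G.Adj y (w (Fin.last m)) := by
    intro w
    rw [hA, mem_lastCyl, mem_inter, SimpleGraph.mem_neighborFinset,
      SimpleGraph.mem_neighborFinset]
  have hmemB : ∀ (i : Fin m) (w : Fin (m + 1) → V),
      w ∈ B i ↔ (∀ j, i.castSucc < j → w j = x) ∧ G.Adj x (w i.castSucc) := by
    intro i w
    rw [hB, mem_cyl, SimpleGraph.mem_neighborFinset]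
  have hmemC : ∀ (i : Fin m) (w : Fin (m + 1) → V),
      w ∈ C i ↔ (∀ j, i.castSucc < j → w j = y) ∧ G.Adj y (w i.castSucc) := by
    intro i w
    rw [hC, mem_cyl, SimpleGraph.mem_neighborFinset]
  have hxy' : x ≠ y := hxy.ne
  have hU : (univ.filter fun w : Fin (m + 1) → V =>
        (∃ i, (∀ j, i < j → w j = x) ∧ G.Adj (w i) x) ∧
        (∃ i, (∀ j, i < j → w j = y) ∧ G.Adj (w i) y))
      = A ∪ (univ.biUnion B ∪ univ.biUnion C) := by
    ext w
    simp only [mem_filter, mem_univ, true_and, mem_union, mem_biUnion]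
    constructor
    · rintro ⟨⟨ix, hx1, hx2⟩, ⟨iy, hy1, hy2⟩⟩
      rcases lt_trichotomy ix iy with hlt | heq | hlt
      · -- ix < iy : B-type, iy must be last
        have hyl : iy = Fin.last m := by
          by_contra hne
          have h1 : w (Fin.last m) = x := hx1 _ (lt_of_lt_of_le hlt (Fin.le_last iy))
          have h2 : w (Fin.last m) = y := hy1 _ (Fin.lt_last_iff_ne_last.mpr hne)
          exact hxy' (h1 ▸ h2)
        have hxne : ix ≠ Fin.last m := fun h => absurd (h ▸ hlt)
          (by rw [hyl]; exact lt_irrefl _)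
        obtain ⟨i₀, rfl⟩ := Fin.exists_castSucc_eq.mpr hxne
        exact Or.inr (Or.inl ⟨i₀, (hmemB i₀ w).mpr ⟨hx1, hx2.symm⟩⟩)
      · -- equal: must be last, A-type
        subst heq
        have hl : ix = Fin.last m := by
          by_contra hne
          have h1 : w (Fin.last m) = x := hx1 _ (Fin.lt_last_iff_ne_last.mpr hne)
          have h2 : w (Fin.last m) = y := hy1 _ (Fin.lt_last_iff_ne_last.mpr hne)
          exact hxy' (h1 ▸ h2)
        subst hl
        exact Or.inl ((hmemA w).mpr ⟨hx2.symm, hy2.symm⟩)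
      · -- iy < ix : C-type
        have hxl : ix = Fin.last m := by
          by_contra hne
          have h1 : w (Fin.last m) = y := hy1 _ (lt_of_lt_of_le hlt (Fin.le_last ix))
          have h2 : w (Fin.last m) = x := hx1 _ (Fin.lt_last_iff_ne_last.mpr hne)
          exact hxy' (h2 ▸ h1)
        have hyne : iy ≠ Fin.last m := fun h => absurd (h ▸ hlt)
          (by rw [hxl]; exact lt_irrefl _)
        obtain ⟨i₀, rfl⟩ := Fin.exists_castSucc_eq.mpr hyne
        exact Or.inr (Or.inr ⟨i₀, (hmemC i₀ w).mpr ⟨hy1, hy2.symm⟩⟩)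
    · have hvac : ∀ j : Fin (m + 1), Fin.last m < j → False := fun j hj =>
        absurd hj (not_lt.mpr (Fin.le_last j))
      rintro (hw | ⟨i, hw⟩ | ⟨i, hw⟩)
      · obtain ⟨h1, h2⟩ := (hmemA w).mp hw
        exact ⟨⟨Fin.last m, fun j hj => absurd (hvac j hj) not_false, h1.symm⟩,
          ⟨Fin.last m, fun j hj => absurd (hvac j hj) not_false, h2.symm⟩⟩
      · obtain ⟨h1, h2⟩ := (hmemB i w).mp hw
        have hlast : w (Fin.last m) = x := h1 _ (Fin.castSucc_lt_last i)
        exact ⟨⟨i.castSucc, h1, h2.symm⟩,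
          ⟨Fin.last m, fun j hj => absurd (hvac j hj) not_false,
            by rw [hlast]; exact hxy⟩⟩
      · obtain ⟨h1, h2⟩ := (hmemC i w).mp hw
        have hlast : w (Fin.last m) = y := h1 _ (Fin.castSucc_lt_last i)
        exact ⟨⟨Fin.last m, fun j hj => absurd (hvac j hj) not_false,
            by rw [hlast]; exact hxy.symm⟩,
          ⟨i.castSucc, h1, h2.symm⟩⟩
  have hwBlast : ∀ (i : Fin m) (w : Fin (m + 1) → V), w ∈ B i → w (Fin.last m) = x :=
    fun i w hw => ((hmemB i w).mp hw).1 _ (Fin.castSucc_lt_last i)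
  have hwClast : ∀ (i : Fin m) (w : Fin (m + 1) → V), w ∈ C i → w (Fin.last m) = y :=
    fun i w hw => ((hmemC i w).mp hw).1 _ (Fin.castSucc_lt_last i)
  have hdBC : Disjoint (univ.biUnion B) (univ.biUnion C) := by
    rw [Finset.disjoint_left]
    rintro w hw hw'
    obtain ⟨i, -, hw⟩ := mem_biUnion.mp hw
    obtain ⟨i', -, hw'⟩ := mem_biUnion.mp hw'
    exact hxy' ((hwBlast i w hw) ▸ (hwClast i' w hw'))
  have hdA : Disjoint A (univ.biUnion B ∪ univ.biUnion C) := by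
    rw [Finset.disjoint_left]
    rintro w hw hw'
    obtain ⟨h1, h2⟩ := (hmemA w).mp hw
    rcases mem_union.mp hw' with hw' | hw'
    · obtain ⟨i, -, hw'⟩ := mem_biUnion.mp hw'
      exact h1.ne' (hwBlast i w hw')
    · obtain ⟨i, -, hw'⟩ := mem_biUnion.mp hw'
      exact h2.ne' (hwClast i w hw')
  rw [hU, card_union_of_disjoint hdA, card_union_of_disjoint hdBC]
  have hcB : (univ.biUnion B).card = G.degree x * psi (Fintype.card V) m := by
    rw [card_biUnion]
    · rw [Finset.sum_congr rfl (fun i _ => by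
        rw [hB, card_cyl, SimpleGraph.card_neighborFinset_eq_degree, Fin.coe_castSucc])]
      rw [Fin.sum_univ_eq_sum_range fun i => G.degree x * Fintype.card V ^ i, ← mul_sum]
      rfl
    · intro i _ i' _ hne
      rw [Function.onFun_apply, Finset.disjoint_left]
      intro w hw hw'
      obtain ⟨h1, h2⟩ := (hmemB i w).mp hw
      obtain ⟨h1', h2'⟩ := (hmemB i' w).mp hw'
      exact hne (Fin.castSucc_injective _
        (wit_unique G ⟨h1, h2.symm⟩ ⟨h1', h2'.symm⟩))
  have hcC : (univ.biUnion C).card = G.degree y * psi (Fintype.card V) m := by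
    rw [card_biUnion]
    · rw [Finset.sum_congr rfl (fun i _ => by
        rw [hC, card_cyl, SimpleGraph.card_neighborFinset_eq_degree, Fin.coe_castSucc])]
      rw [Fin.sum_univ_eq_sum_range fun i => G.degree y * Fintype.card V ^ i, ← mul_sum]
      rfl
    · intro i _ i' _ hne
      rw [Function.onFun_apply, Finset.disjoint_left]
      intro w hw hw'
      obtain ⟨h1, h2⟩ := (hmemC i w).mp hw
      obtain ⟨h1', h2'⟩ := (hmemC i' w).mp hw'
      exact hne (Fin.castSucc_injective _
        (wit_unique G ⟨h1, h2.symm⟩ ⟨h1', h2'.symm⟩))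
  rw [hcB, hcC, hA, card_lastCyl]
  rfl

end AuxDev

theorem copyCount_degSucc_deg {n : ℕ} (hn : 2 ≤ n) (G : SimpleGraph (Fin n))
    [DecidableRel G.Adj] (x y : Fin n) (hxy : G.Adj x y) (t : ℕ) (ht : 2 ≤ t) :
    (copyCount G t x y (G.degree x + 1) (G.degree y) : ℤ) =
      (n : ℤ) ^ (t - 2) * ((G.degree x : ℤ) - tau G x y) - psi n (t - 2) * G.degree y := by
  obtain ⟨m, rfl⟩ : ∃ m, t = m + 2 := ⟨t - 2, by omega⟩
  have h2 : m + 2 - 2 = m := by omega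
  rw [h2, copyCount_eq G x y hxy]
  have hEx := card_filter_exists G (k := m + 1) x
  have hboth := card_filter_both G x y hxy (m := m)
  have hpart : (univ.filter fun w : Fin (m + 1) → Fin n =>
        ((∃ i, (∀ j, i < j → w j = x) ∧ G.Adj (w i) x) ∧
          (∃ i, (∀ j, i < j → w j = y) ∧ G.Adj (w i) y))).card +
      (univ.filter fun w : Fin (m + 1) → Fin n =>
        ((∃ i, (∀ j, i < j → w j = x) ∧ G.Adj (w i) x) ∧
          ¬∃ i, (∀ j, i < j → w j = y) ∧ G.Adj (w i) y)).card =
      (univ.filter fun w : Fin (m + 1) → Fin n =>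
        ∃ i, (∀ j, i < j → w j = x) ∧ G.Adj (w i) x).card := by
    rw [← filter_filter, ← filter_filter]
    exact card_filter_add_card_filter_not _
  rw [hEx] at hpart
  rw [hboth] at hpart
  have hcard : Fintype.card (Fin n) = n := Fintype.card_fin n
  rw [hcard] at hpart
  have hpsi : psi n (m + 1) = psi n m + n ^ m := Finset.sum_range_succ _ m
  rw [hpsi] at hpart
  have hpart' : ((tau G x y : ℤ) * (n : ℤ) ^ m +
        ((G.degree x : ℤ) * psi n m + (G.degree y : ℤ) * psi n m)) +
      ((univ.filter fun w : Fin (m + 1) → Fin n =>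
        ((∃ i, (∀ j, i < j → w j = x) ∧ G.Adj (w i) x) ∧
          ¬∃ i, (∀ j, i < j → w j = y) ∧ G.Adj (w i) y)).card : ℤ) =
      (G.degree x : ℤ) * ((psi n m : ℤ) + (n : ℤ) ^ m) := by
    exact_mod_cast hpart
  push_cast
  linarith [hpart']
end

section
/- Let G = (V,E) be a graph of order n ≥ 2, let α be a real number and let t ≥ 2 be an integer. Then R_α(S(G,t)) = Σ_{{x,y}∈E} W_{{x,y}}, where W_{{x,y}} = n^{t−2}(n − d(x) − d(y) + τ(x,y))·d(x)^α d(y)^α + (n^{t−2}(d(y) − τ(x,y)) − ψ(t−2)d(x))·d(x)^α (d(y)+1)^α + (n^{t−2}(d(x) − τ(x,y)) − ψ(t−2)d(y))·(d(x)+1)^α d(y)^α + (n^{t−2}(τ(x,y) + 1) + ψ(t−2)(d(x) + d(y) + 1))·(d(x)+1)^α (d(y)+1)^α. -/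
open Finset

/-- The contribution `W_{{x,y}}` of the edge `{x,y}` of `G` to `R_α(S(G,t))`. -/
noncomputable def Wedge {V : Type*} [Fintype V] [DecidableEq V] (G : SimpleGraph V)
    [DecidableRel G.Adj] (n t : ℕ) (α : ℝ) (x y : V) : ℝ :=
  (n : ℝ) ^ (t - 2) * ((n : ℝ) - G.degree x - G.degree y + tau G x y) *
      ((G.degree x : ℝ) ^ α * (G.degree y : ℝ) ^ α) +
    ((n : ℝ) ^ (t - 2) * ((G.degree y : ℝ) - tau G x y) - (psi n (t - 2) : ℝ) * G.degree x) *
      ((G.degree x : ℝ) ^ α * ((G.degree y : ℝ) + 1) ^ α) +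
    ((n : ℝ) ^ (t - 2) * ((G.degree x : ℝ) - tau G x y) - (psi n (t - 2) : ℝ) * G.degree y) *
      (((G.degree x : ℝ) + 1) ^ α * (G.degree y : ℝ) ^ α) +
    ((n : ℝ) ^ (t - 2) * ((tau G x y : ℝ) + 1) +
        (psi n (t - 2) : ℝ) * ((G.degree x : ℝ) + G.degree y + 1)) *
      (((G.degree x : ℝ) + 1) ^ α * ((G.degree y : ℝ) + 1) ^ α)

lemma Wedge_comm {V : Type*} [Fintype V] [DecidableEq V] (G : SimpleGraph V)
    [DecidableRel G.Adj] (n t : ℕ) (α : ℝ) (x y : V) :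
    Wedge G n t α x y = Wedge G n t α y x := by
  unfold Wedge
  rw [tau_comm]
  ring


set_option linter.unusedSectionVars false
set_option maxHeartbeats 1000000

section
variable {n : ℕ} (G : SimpleGraph (Fin n)) [DecidableRel G.Adj]

def Tail (x : Fin n) {m : ℕ} (w : Fin m → Fin n) : Prop :=
  ∃ j : Fin m, (∀ k, j < k → w k = x) ∧ G.Adj (w j) x

instance (x : Fin n) {m : ℕ} (w : Fin m → Fin n) : Decidable (Tail G x w) := by
  unfold Tail; infer_instance

lemma tail_snoc (x c : Fin n) {m : ℕ} (w : Fin m → Fin n) :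
    Tail G x (Fin.snoc w c) ↔ (if c = x then Tail G x w else G.Adj c x) := by
  split_ifs with hc
  · subst hc
    constructor
    · rintro ⟨j, hj, ha⟩
      by_cases hj' : j = Fin.last m
      · subst hj'; simp only [Fin.snoc_last] at ha; exact absurd ha (G.irrefl)
      · obtain ⟨j', rfl⟩ := Fin.exists_castSucc_eq.mpr hj'
        refine ⟨j', fun k hk => ?_, ?_⟩
        · have := hj (Fin.castSucc k) (by simpa using hk)
          simpa using this
        · simpa using ha
    · rintro ⟨j, hj, ha⟩
      refine ⟨Fin.castSucc j, fun k hk => ?_, by simpa⟩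
      induction k using Fin.lastCases with
      | last => simp
      | cast k => have := hj k (by simpa using hk); simpa using this
  · constructor
    · rintro ⟨j, hj, ha⟩
      by_cases hj' : j = Fin.last m
      · subst hj'; simpa using ha
      · obtain ⟨j', rfl⟩ := Fin.exists_castSucc_eq.mpr hj'
        have := hj (Fin.last m) (Fin.castSucc_lt_last j')
        simp only [Fin.snoc_last] at this; exact absurd this hc
    · intro h
      exact ⟨Fin.last m, fun k hk => absurd hk (by simp [Fin.le_last k, not_lt]), by simpa⟩

lemma card_filter_snoc {V : Type*} [Fintype V] [DecidableEq V] {m : ℕ}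
    (p : (Fin (m+1) → V) → Prop) [DecidablePred p] :
    (univ.filter p).card = ∑ c : V, (univ.filter (fun w : Fin m → V => p (Fin.snoc w c))).card := by
  simp only [Finset.card_filter]
  rw [← Equiv.sum_comp (Fin.snocEquiv (fun _ => V)) (fun w => if p w then 1 else 0)]
  rw [Fintype.sum_prod_type]
  simp [Fin.snocEquiv]
  simp only [Finset.card_filter]
  congr!

lemma degree_eq_card_filter (x : Fin n) :
    (univ.filter (fun c => G.Adj c x)).card = G.degree x := by
  rw [← SimpleGraph.card_neighborFinset_eq_degree, SimpleGraph.neighborFinset_eq_filter]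
  congr 1
  ext c
  simp [G.adj_comm]

lemma card_tail (x : Fin n) (m : ℕ) :
    (univ.filter (fun w : Fin m → Fin n => Tail G x w)).card = G.degree x * psi n m := by
  induction m with
  | zero => simp [Tail, psi]
  | succ m ih =>
    rw [card_filter_snoc]
    have key : ∀ c : Fin n, (univ.filter (fun w : Fin m → Fin n => Tail G x (Fin.snoc w c))).card
        = (if c = x then G.degree x * psi n m else 0) + (if G.Adj c x then n ^ m else 0) := by
      intro c
      by_cases hc : c = x
      · subst hc
        rw [if_pos rfl, if_neg (G.irrefl), add_zero, ← ih]
        congr 1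
        apply Finset.filter_congr
        intro w _
        simp [tail_snoc]
      · by_cases ha : G.Adj c x
        · simp only [tail_snoc, if_neg hc, if_pos ha, zero_add, Finset.filter_true_of_mem
            (fun _ _ => ha)]
          simp [Fintype.card_fun]
        · simp [tail_snoc, hc, ha]
    rw [Finset.sum_congr rfl (fun c _ => key c), Finset.sum_add_distrib]
    rw [Finset.sum_ite_eq' univ x (fun _ => G.degree x * psi n m)]
    have h2 : ∑ c : Fin n, (if G.Adj c x then n ^ m else 0) = G.degree x * n ^ m := by
      rw [← Finset.sum_filter, Finset.sum_const, smul_eq_mul, degree_eq_card_filter]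
    rw [h2]
    simp only [Finset.mem_univ, if_true]
    simp [psi, Finset.sum_range_succ, Nat.mul_add]

end
section
variable {n : ℕ} (G : SimpleGraph (Fin n)) [DecidableRel G.Adj]

lemma card_tail_both (x y : Fin n) (hxy : G.Adj x y) (m : ℕ) :
    (univ.filter (fun w : Fin (m+1) → Fin n => Tail G x w ∧ Tail G y w)).card
      = tau G x y * n ^ m + (G.degree x + G.degree y) * psi n m := by
  have hne : x ≠ y := hxy.ne
  rw [card_filter_snoc]
  have key : ∀ c : Fin n, (univ.filter (fun w : Fin m → Fin n =>
      Tail G x (Fin.snoc w c) ∧ Tail G y (Fin.snoc w c))).card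
      = ((if c = x then G.degree x * psi n m else 0) + (if c = y then G.degree y * psi n m else 0))
        + (if G.Adj c x ∧ G.Adj c y then n ^ m else 0) := by
    intro c
    by_cases hcx : c = x
    · subst hcx
      rw [if_pos rfl, if_neg hne, if_neg (fun h => G.irrefl h.1), add_zero, add_zero,
        ← card_tail G c m]
      congr 1
      apply Finset.filter_congr
      intro w _
      simp [tail_snoc, hne, hxy]
    · by_cases hcy : c = y
      · subst hcy
        rw [if_neg hcx, if_pos rfl, if_neg (fun h => G.irrefl h.2), add_zero, zero_add,
          ← card_tail G c m]
        congr 1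
        apply Finset.filter_congr
        intro w _
        simp [tail_snoc, hcx, hxy.symm]
      · rw [if_neg hcx, if_neg hcy, zero_add, zero_add]
        by_cases ha : G.Adj c x ∧ G.Adj c y
        · rw [if_pos ha]
          have : ∀ w : Fin m → Fin n, (Tail G x (Fin.snoc w c) ∧ Tail G y (Fin.snoc w c)) := by
            intro w
            constructor <;> simp [tail_snoc, hcx, hcy, ha.1, ha.2]
          rw [Finset.filter_true_of_mem (fun w _ => this w)]
          simp [Fintype.card_fun]
        · rw [if_neg ha]
          rw [Finset.card_eq_zero, Finset.filter_eq_empty_iff]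
          intro w _
          simp only [tail_snoc, if_neg hcx, if_neg hcy]
          exact ha
  rw [Finset.sum_congr rfl (fun c _ => key c), Finset.sum_add_distrib, Finset.sum_add_distrib,
    Finset.sum_ite_eq' univ x (fun _ => G.degree x * psi n m),
    Finset.sum_ite_eq' univ y (fun _ => G.degree y * psi n m)]
  have h3 : ∑ c : Fin n, (if G.Adj c x ∧ G.Adj c y then n ^ m else 0) = tau G x y * n ^ m := by
    have he : univ.filter (fun c => G.Adj c x ∧ G.Adj c y)
        = G.neighborFinset x ∩ G.neighborFinset y := by
      ext c
      simp only [Finset.mem_filter, Finset.mem_univ, true_and, Finset.mem_inter,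
        SimpleGraph.mem_neighborFinset]
      rw [G.adj_comm x c, G.adj_comm y c]
    rw [← Finset.sum_filter, he, Finset.sum_const, smul_eq_mul, tau]
  rw [h3]
  simp only [Finset.mem_univ, if_true]
  ring

section
variable {n : ℕ} (G : SimpleGraph (Fin n)) [DecidableRel G.Adj]

def Eps {s : ℕ} (u : Fin (s+1) → Fin n) : Prop :=
  ∃ i : Fin (s+1), i ≠ Fin.last s ∧ (∀ j, i < j → u j = u (Fin.last s)) ∧
    G.Adj (u i) (u (Fin.last s))

instance {s : ℕ} (u : Fin (s+1) → Fin n) : Decidable (Eps G u) := by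
  unfold Eps; infer_instance

lemma lt_last_of_ne {s : ℕ} {j : Fin (s+1)} (h : j ≠ Fin.last s) : j < Fin.last s :=
  lt_of_le_of_ne (Fin.le_last j) h

/-- Extract the canonical data from a "non-tail-type" neighbor. -/
lemma neighbor_notP {s : ℕ} {u v : Fin (s+1) → Fin n}
    (hadj : (sierpinskiGraph G (s+1)).Adj u v)
    (hnp : ¬ (∀ j, j ≠ Fin.last s → v j = u j)) :
    ∃ i : Fin (s+1), i ≠ Fin.last s ∧ (∀ j, i < j → u j = u (Fin.last s)) ∧
      G.Adj (u i) (u (Fin.last s)) ∧ (∀ j, j < i → v j = u j) ∧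
      v i = u (Fin.last s) ∧ (∀ j, i < j → v j = u i) := by
  obtain ⟨i, h1, h2, h3, h4⟩ := hadj
  have hil : i ≠ Fin.last s := by
    rintro rfl
    exact hnp (fun j hj => (h1 j (lt_last_of_ne hj)).symm)
  have hlast : u (Fin.last s) = v i ∧ v (Fin.last s) = u i := h4 _ (lt_last_of_ne hil)
  refine ⟨i, hil, fun j hj => ?_, ?_, fun j hj => (h1 j hj).symm, hlast.1.symm,
    fun j hj => (h4 j hj).2⟩
  · rw [(h4 j hj).1, hlast.1]
  · rw [hlast.1]; exact h3

lemma degree_sierpinski {s : ℕ} (u : Fin (s+1) → Fin n) :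
    (sierpinskiGraph G (s+1)).degree u
      = G.degree (u (Fin.last s)) + (if Eps G u then 1 else 0) := by
  classical
  rw [← SimpleGraph.card_neighborFinset_eq_degree, ← SimpleGraph.card_neighborFinset_eq_degree]
  set N := (sierpinskiGraph G (s+1)).neighborFinset u with hN
  set P : (Fin (s+1) → Fin n) → Prop := fun v => ∀ j, j ≠ Fin.last s → v j = u j with hP
  rw [← Finset.card_filter_add_card_filter_not (p := P) (s := N)]
  congr 1
  · -- tail-type neighbors
    have himg : N.filter P = (G.neighborFinset (u (Fin.last s))).image
        (fun c => Function.update u (Fin.last s) c) := by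
      ext v
      simp only [Finset.mem_filter, SimpleGraph.mem_neighborFinset, Finset.mem_image, hN]
      constructor
      · rintro ⟨⟨i, h1, h2, h3, h4⟩, hp⟩
        have hil : i = Fin.last s := by
          by_contra hne
          exact h2 (hp i hne).symm
        subst hil
        refine ⟨v (Fin.last s), h3, ?_⟩
        funext j
        by_cases hj : j = Fin.last s
        · subst hj; simp
        · rw [Function.update_of_ne hj]
          exact (hp j hj).symm
      · rintro ⟨c, hc, rfl⟩
        refine ⟨⟨Fin.last s, fun j hj => ?_, ?_, ?_, fun j hj => absurd hj (Fin.le_last j).not_gt⟩,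
          fun j hj => Function.update_of_ne hj _ _⟩
        · exact (Function.update_of_ne (ne_of_lt hj) _ _).symm
        · simpa using hc.ne
        · simpa using hc
    rw [himg, Finset.card_image_of_injective]
    intro a b hab
    have := congrFun hab (Fin.last s)
    simpa using this
  · -- the extra neighbor
    by_cases he : Eps G u
    · rw [if_pos he]
      obtain ⟨i, hil, hc, ha⟩ := he
      set v₀ : Fin (s+1) → Fin n := fun j =>
        if j < i then u j else if j = i then u (Fin.last s) else u i with hv₀
      rw [Finset.card_eq_one]
      refine ⟨v₀, ?_⟩
      ext v
      simp only [Finset.mem_filter, SimpleGraph.mem_neighborFinset, Finset.mem_singleton, hN]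
      constructor
      · rintro ⟨hadj, hp⟩
        obtain ⟨i', hil', hc', ha', hlt', hvi', hgt'⟩ := neighbor_notP G hadj hp
        have hii : i' = i := by
          rcases lt_trichotomy i' i with h | h | h
          · exact absurd (hc' i h ▸ ha.ne) (fun hf => hf rfl)
          · exact h
          · exact absurd (hc i' h ▸ ha'.ne) (fun hf => hf rfl)
        subst hii
        funext j
        rcases lt_trichotomy j i' with h | h | h
        · rw [hv₀]; simp only [if_pos h]; exact hlt' j h
        · subst h; rw [hv₀]; simp only [lt_irrefl, if_neg (lt_irrefl _), if_pos rfl]; exact hvi'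
        · rw [hv₀]; simp only [if_neg (not_lt_of_gt h), if_neg (ne_of_gt h)]
          exact hgt' j h
      · rintro rfl
        constructor
        · refine ⟨i, fun j hj => by rw [hv₀]; simp [if_pos hj], ?_, ?_, fun j hj => ?_⟩
          · rw [hv₀]; simp only [lt_irrefl, if_neg (lt_irrefl _), if_pos rfl]
            exact ha.ne
          · rw [hv₀]; simp only [lt_irrefl, if_neg (lt_irrefl _), if_pos rfl]
            exact ha
          · rw [hv₀]; simp only [if_neg (not_lt_of_gt hj), if_neg (ne_of_gt hj),
              if_neg (lt_irrefl _), if_pos rfl]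
            exact ⟨hc j hj, trivial⟩
        · intro hp
          have := hp i hil
          rw [hv₀] at this
          simp only [lt_irrefl, if_neg (lt_irrefl _), if_pos rfl] at this
          exact ha.ne this.symm
    · rw [if_neg he, Finset.card_eq_zero, Finset.filter_eq_empty_iff]
      intro v hv
      rw [hN, SimpleGraph.mem_neighborFinset] at hv
      intro hp
      obtain ⟨i', hil', hc', ha', _, _, _⟩ := neighbor_notP G hv hp
      exact he ⟨i', hil', hc', ha'⟩
end

section
variable {n : ℕ}

def dset {t : ℕ} (u v : Fin t → Fin n) : Finset (Fin t) :=
  univ.filter (fun j => u j ≠ v j)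

lemma dset_comm {t : ℕ} (u v : Fin t → Fin n) : dset u v = dset v u := by
  unfold dset; ext j; simp [ne_comm]

noncomputable def phiFun {t : ℕ} (u v : Fin (t+1) → Fin n) : Sym2 (Fin n) :=
  if h : (dset u v).Nonempty then s((u ((dset u v).min' h)), (v ((dset u v).min' h)))
  else s(u 0, v 0)

lemma phiFun_comm {t : ℕ} (u v : Fin (t+1) → Fin n) : phiFun u v = phiFun v u := by
  unfold phiFun
  by_cases h : (dset u v).Nonempty
  · have h' : (dset v u).Nonempty := dset_comm u v ▸ h
    rw [dif_pos h, dif_pos h']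
    have hm : (dset v u).min' h' = (dset u v).min' h := by
      congr 1
      exact dset_comm v u
    rw [hm, Sym2.eq_swap]
  · have huv : u = v := by
      funext j
      by_contra hj
      exact h ⟨j, by simp [dset, hj]⟩
    rw [dif_neg h, dif_neg (by rw [← dset_comm u v]; exact h)]
    rw [huv]

noncomputable def Phi {t : ℕ} (e : Sym2 (Fin (t+1) → Fin n)) : Sym2 (Fin n) :=
  Sym2.lift ⟨phiFun, phiFun_comm⟩ e

variable (G : SimpleGraph (Fin n)) [DecidableRel G.Adj]

lemma phiFun_eq {t : ℕ} {u v : Fin (t+1) → Fin n} {i : Fin (t+1)}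
    (h1 : ∀ j, j < i → u j = v j) (h2 : u i ≠ v i) :
    phiFun u v = s(u i, v i) := by
  have hi : i ∈ dset u v := by simp [dset, h2]
  have hne : (dset u v).Nonempty := ⟨i, hi⟩
  have hmin : (dset u v).min' hne = i := by
    refine le_antisymm (Finset.min'_le _ i hi) (Finset.le_min' _ _ _ ?_)
    intro j hj
    by_contra hij
    have : u j = v j := h1 j (lt_of_not_ge hij)
    simp [dset, this] at hj
  rw [phiFun, dif_pos hne, hmin]

lemma Phi_mem_edgeFinset {t : ℕ} {e : Sym2 (Fin (t+1) → Fin n)}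
    (he : e ∈ (sierpinskiGraph G (t+1)).edgeFinset) : Phi e ∈ G.edgeFinset := by
  induction e with
  | _ u v =>
    rw [SimpleGraph.mem_edgeFinset, SimpleGraph.mem_edgeSet] at he
    obtain ⟨i, h1, h2, h3, h4⟩ := he
    rw [Phi, Sym2.lift_mk]
    show phiFun u v ∈ G.edgeFinset
    rw [phiFun_eq h1 h2, SimpleGraph.mem_edgeFinset, SimpleGraph.mem_edgeSet]
    exact h3

def uWord {t : ℕ} (i : Fin t) (w : Fin (i:ℕ) → Fin n) (x y : Fin n) : Fin t → Fin n :=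
  fun j => if h : (j:ℕ) < (i:ℕ) then w ⟨j, h⟩ else if j = i then x else y

lemma uWord_lt {t : ℕ} (i : Fin t) (w : Fin (i:ℕ) → Fin n) (x y : Fin n) {j : Fin t}
    (h : j < i) : uWord i w x y j = w ⟨j, h⟩ := dif_pos h

lemma uWord_self {t : ℕ} (i : Fin t) (w : Fin (i:ℕ) → Fin n) (x y : Fin n) :
    uWord i w x y i = x := by
  rw [uWord, dif_neg (lt_irrefl (i:ℕ)), if_pos rfl]

lemma uWord_gt {t : ℕ} (i : Fin t) (w : Fin (i:ℕ) → Fin n) (x y : Fin n) {j : Fin t}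
    (h : i < j) : uWord i w x y j = y := by
  rw [uWord, dif_neg (show ¬((j:ℕ) < (i:ℕ)) from not_lt_of_gt h), if_neg (ne_of_gt h)]

lemma uWord_adj {t : ℕ} {x y : Fin n} (hxy : G.Adj x y) (i : Fin t)
    (w : Fin (i:ℕ) → Fin n) :
    (sierpinskiGraph G t).Adj (uWord i w x y) (uWord i w y x) := by
  refine ⟨i, fun j hj => ?_, ?_, ?_, fun j hj => ?_⟩
  · rw [uWord_lt i w x y hj, uWord_lt i w y x hj]
  · rw [uWord_self, uWord_self]; exact hxy.ne
  · rw [uWord_self, uWord_self]; exact hxy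
  · rw [uWord_gt i w x y hj, uWord_gt i w y x hj, uWord_self, uWord_self]
    exact ⟨rfl, rfl⟩

lemma phiFun_uWord {t : ℕ} {x y : Fin n} (hxy : x ≠ y) (i : Fin (t+1))
    (w : Fin (i:ℕ) → Fin n) :
    phiFun (uWord i w x y) (uWord i w y x) = s(x, y) := by
  rw [phiFun_eq (i := i) (fun j hj => by
      rw [uWord_lt i w x y hj, uWord_lt i w y x hj])
    (by rw [uWord_self, uWord_self]; exact hxy)]
  rw [uWord_self, uWord_self]

lemma deg_uWord_ne_last {m : ℕ} {x y : Fin n} (hxy : G.Adj x y) (i : Fin (m+2))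
    (hi : i ≠ Fin.last (m+1)) (w : Fin (i:ℕ) → Fin n) :
    (sierpinskiGraph G (m+2)).degree (uWord i w x y) = G.degree y + 1 := by
  have hil : i < Fin.last (m+1) := lt_last_of_ne hi
  have hl : uWord i w x y (Fin.last (m+1)) = y := uWord_gt i w x y hil
  rw [degree_sierpinski, hl, if_pos]
  exact ⟨i, hi, fun j hj => by rw [uWord_gt i w x y hj, hl],
    by rw [uWord_self, hl]; exact hxy⟩

lemma eps_uWord_last {m : ℕ} {x y : Fin n} (w : Fin (m+1) → Fin n) :
    Eps G (uWord (Fin.last (m+1)) w x y) ↔ Tail G x w := by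
  have hl : uWord (Fin.last (m+1)) w x y (Fin.last (m+1)) = x :=
    uWord_self (Fin.last (m+1)) w x y
  constructor
  · rintro ⟨i, hi, hc, ha⟩
    have hi' : (i : ℕ) < m + 1 := lt_last_of_ne hi
    refine ⟨⟨i, hi'⟩, fun k hk => ?_, ?_⟩
    · have h1 : i < Fin.castSucc k := by
        rw [Fin.lt_def]
        exact hk
      have := hc (Fin.castSucc k) h1
      rw [hl] at this
      rw [uWord_lt (Fin.last (m+1)) w x y (Fin.castSucc_lt_last k)] at this
      simpa using this
    · have := ha
      rw [hl, uWord_lt (Fin.last (m+1)) w x y (show i < Fin.last (m+1) from lt_last_of_ne hi)] at this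
      simpa using this
  · rintro ⟨j, hj, ha⟩
    refine ⟨Fin.castSucc j, (Fin.castSucc_lt_last j).ne, fun j2 hj2 => ?_, ?_⟩
    · rw [hl]
      induction j2 using Fin.lastCases with
      | last => exact hl
      | cast k =>
        rw [uWord_lt (Fin.last (m+1)) w x y (Fin.castSucc_lt_last k)]
        have hk : j < k := by rwa [Fin.castSucc_lt_castSucc_iff] at hj2
        simpa using hj k hk
    · rw [hl, uWord_lt (Fin.last (m+1)) w x y (Fin.castSucc_lt_last j)]
      simpa using ha

lemma psi_succ_real (m : ℕ) : (psi n (m+1) : ℝ) = psi n m + (n:ℝ)^m := by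
  rw [psi, Finset.sum_range_succ, ← psi]
  push_cast
  ring

lemma sum_last {m : ℕ} (x y : Fin n) (hxy : G.Adj x y) (α : ℝ) :
    ∑ w : Fin (m+1) → Fin n,
      (((G.degree x + (if Tail G x w then 1 else 0))
        * (G.degree y + (if Tail G y w then 1 else 0)) : ℕ) : ℝ) ^ α
    = ((n:ℝ)^m * ((n:ℝ) - G.degree x - G.degree y + tau G x y))
        * (((G.degree x : ℝ) * (G.degree y : ℝ)) ^ α)
      + ((n:ℝ)^m * ((G.degree y : ℝ) - tau G x y) - (psi n m : ℝ) * G.degree x)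
        * (((G.degree x : ℝ) * ((G.degree y : ℝ) + 1)) ^ α)
      + ((n:ℝ)^m * ((G.degree x : ℝ) - tau G x y) - (psi n m : ℝ) * G.degree y)
        * ((((G.degree x : ℝ) + 1) * (G.degree y : ℝ)) ^ α)
      + ((n:ℝ)^m * ((tau G x y : ℝ)) + (psi n m : ℝ) * ((G.degree x : ℝ) + G.degree y))
        * ((((G.degree x : ℝ) + 1) * ((G.degree y : ℝ) + 1)) ^ α) := by
  classical
  set dx := G.degree x with hdx
  set dy := G.degree y with hdy
  set Tx : (Fin (m+1) → Fin n) → Prop := fun w => Tail G x w with hTx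
  set Ty : (Fin (m+1) → Fin n) → Prop := fun w => Tail G y w with hTy
  set F : (Fin (m+1) → Fin n) → ℝ := fun w =>
    (((dx + (if Tx w then 1 else 0)) * (dy + (if Ty w then 1 else 0)) : ℕ) : ℝ) ^ α with hF
  show ∑ w, F w = _
  rw [← Finset.sum_filter_add_sum_filter_not univ Tx F,
    ← Finset.sum_filter_add_sum_filter_not (univ.filter Tx) Ty F,
    ← Finset.sum_filter_add_sum_filter_not (univ.filter (fun w => ¬ Tx w)) Ty F]
  have e11 : ∑ w ∈ (univ.filter Tx).filter Ty, F w
      = (((univ.filter Tx).filter Ty).card : ℝ) * ((((dx:ℝ) + 1) * ((dy:ℝ) + 1)) ^ α) := by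
    rw [Finset.sum_congr rfl (g := fun _ => ((((dx:ℝ) + 1) * ((dy:ℝ) + 1)) ^ α))
      (fun w hw => ?_), Finset.sum_const, nsmul_eq_mul]
    simp only [Finset.mem_filter] at hw
    rw [hF]
    simp only [if_pos hw.1.2, if_pos hw.2]
    push_cast
    ring_nf
  have e10 : ∑ w ∈ (univ.filter Tx).filter (fun w => ¬ Ty w), F w
      = (((univ.filter Tx).filter (fun w => ¬ Ty w)).card : ℝ)
          * ((((dx:ℝ) + 1) * (dy:ℝ)) ^ α) := by
    rw [Finset.sum_congr rfl (g := fun _ => ((((dx:ℝ) + 1) * (dy:ℝ)) ^ α))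
      (fun w hw => ?_), Finset.sum_const, nsmul_eq_mul]
    simp only [Finset.mem_filter] at hw
    rw [hF]
    simp only [if_pos hw.1.2, if_neg hw.2]
    push_cast
    ring_nf
  have e01 : ∑ w ∈ (univ.filter (fun w => ¬ Tx w)).filter Ty, F w
      = (((univ.filter (fun w => ¬ Tx w)).filter Ty).card : ℝ)
          * (((dx:ℝ) * ((dy:ℝ) + 1)) ^ α) := by
    rw [Finset.sum_congr rfl (g := fun _ => (((dx:ℝ) * ((dy:ℝ) + 1)) ^ α))
      (fun w hw => ?_), Finset.sum_const, nsmul_eq_mul]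
    simp only [Finset.mem_filter] at hw
    rw [hF]
    simp only [if_neg hw.1.2, if_pos hw.2]
    push_cast
    ring_nf
  have e00 : ∑ w ∈ (univ.filter (fun w => ¬ Tx w)).filter (fun w => ¬ Ty w), F w
      = (((univ.filter (fun w => ¬ Tx w)).filter (fun w => ¬ Ty w)).card : ℝ)
          * (((dx:ℝ) * (dy:ℝ)) ^ α) := by
    rw [Finset.sum_congr rfl (g := fun _ => (((dx:ℝ) * (dy:ℝ)) ^ α))
      (fun w hw => ?_), Finset.sum_const, nsmul_eq_mul]
    simp only [Finset.mem_filter] at hw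
    rw [hF]
    simp only [if_neg hw.1.2, if_neg hw.2]
    push_cast
    ring_nf
  rw [e11, e10, e01, e00]
  -- cardinalities
  have hc11 : ((((univ.filter Tx).filter Ty)).card : ℝ)
      = (tau G x y : ℝ) * (n:ℝ)^m + ((dx:ℝ) + (dy:ℝ)) * (psi n m : ℝ) := by
    rw [Finset.filter_filter]
    exact_mod_cast congrArg (Nat.cast (R := ℝ)) (card_tail_both G x y hxy m)
  have hcx : (((univ.filter Tx)).card : ℝ) = (dx:ℝ) * (psi n (m+1) : ℝ) := by
    exact_mod_cast congrArg (Nat.cast (R := ℝ)) (card_tail G x (m+1))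
  have hcy : (((univ.filter Ty)).card : ℝ) = (dy:ℝ) * (psi n (m+1) : ℝ) := by
    exact_mod_cast congrArg (Nat.cast (R := ℝ)) (card_tail G y (m+1))
  have hs1 : ((univ.filter Tx).filter Ty).card
      + ((univ.filter Tx).filter (fun w => ¬ Ty w)).card = (univ.filter Tx).card :=
    Finset.card_filter_add_card_filter_not _
  have hswap : ((univ.filter Ty).filter Tx) = ((univ.filter Tx).filter Ty) := by
    rw [Finset.filter_filter, Finset.filter_filter]
    exact Finset.filter_congr (fun w _ => and_comm)
  have hswap2 : ((univ.filter Ty).filter (fun w => ¬ Tx w))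
      = ((univ.filter (fun w => ¬ Tx w)).filter Ty) := by
    rw [Finset.filter_filter, Finset.filter_filter]
    exact Finset.filter_congr (fun w _ => and_comm)
  have hs2 : ((univ.filter Ty).filter Tx).card
      + ((univ.filter Ty).filter (fun w => ¬ Tx w)).card = (univ.filter Ty).card :=
    Finset.card_filter_add_card_filter_not _
  have hs3 : (univ.filter Tx).card + (univ.filter (fun w => ¬ Tx w)).card
      = (univ : Finset (Fin (m+1) → Fin n)).card :=
    Finset.card_filter_add_card_filter_not _
  have hs4 : ((univ.filter (fun w => ¬ Tx w)).filter Ty).card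
      + ((univ.filter (fun w => ¬ Tx w)).filter (fun w => ¬ Ty w)).card
      = (univ.filter (fun w => ¬ Tx w)).card :=
    Finset.card_filter_add_card_filter_not _
  have huniv : (((univ : Finset (Fin (m+1) → Fin n))).card : ℝ) = (n:ℝ)^(m+1) := by
    rw [Finset.card_univ, Fintype.card_fun]
    push_cast [Fintype.card_fin]
    ring
  have hc10 : ((((univ.filter Tx).filter (fun w => ¬ Ty w))).card : ℝ)
      = (dx:ℝ) * (psi n (m+1) : ℝ)
        - ((tau G x y : ℝ) * (n:ℝ)^m + ((dx:ℝ) + (dy:ℝ)) * (psi n m : ℝ)) := by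
    have := congrArg (Nat.cast (R := ℝ)) hs1
    push_cast at this
    rw [hc11, hcx] at this
    linarith
  have hc01 : ((((univ.filter (fun w => ¬ Tx w)).filter Ty)).card : ℝ)
      = (dy:ℝ) * (psi n (m+1) : ℝ)
        - ((tau G x y : ℝ) * (n:ℝ)^m + ((dx:ℝ) + (dy:ℝ)) * (psi n m : ℝ)) := by
    have := congrArg (Nat.cast (R := ℝ)) hs2
    rw [hswap, hswap2] at this
    push_cast at this
    rw [hc11] at this
    linarith [hcy]
  have hc00 : ((((univ.filter (fun w => ¬ Tx w)).filter (fun w => ¬ Ty w))).card : ℝ)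
      = (n:ℝ)^(m+1) - (dx:ℝ) * (psi n (m+1) : ℝ) - (dy:ℝ) * (psi n (m+1) : ℝ)
        + ((tau G x y : ℝ) * (n:ℝ)^m + ((dx:ℝ) + (dy:ℝ)) * (psi n m : ℝ)) := by
    have h3 := congrArg (Nat.cast (R := ℝ)) hs3
    have h4 := congrArg (Nat.cast (R := ℝ)) hs4
    push_cast at h3 h4
    rw [hcx, huniv] at h3
    rw [hc01] at h4
    linarith
  rw [hc11, hc10, hc01, hc00, psi_succ_real]
  ring


lemma deg_uWord_last {m : ℕ} (x y : Fin n) (w : Fin (m+1) → Fin n) :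
    (sierpinskiGraph G (m+2)).degree (uWord (Fin.last (m+1)) w x y)
      = G.degree x + (if Tail G x w then 1 else 0) := by
  rw [degree_sierpinski, uWord_self]
  congr 1
  simp only [eps_uWord_last]

lemma uWord_inj {t : ℕ} {x y : Fin n} (hne : x ≠ y) {i i' : Fin t}
    {w : Fin (i:ℕ) → Fin n} {w' : Fin (i':ℕ) → Fin n}
    (h : uWord i w x y = uWord i' w' x y) :
    (⟨i, w⟩ : (j : Fin t) × (Fin (j:ℕ) → Fin n)) = ⟨i', w'⟩ := by
  have hii : i = i' := by
    rcases lt_trichotomy i i' with hlt | heq | hlt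
    · have := congrFun h i'
      rw [uWord_gt i w x y hlt, uWord_self] at this
      exact absurd this.symm hne
    · exact heq
    · have := congrFun h i
      rw [uWord_self, uWord_gt i' w' x y hlt] at this
      exact absurd this hne
  subst hii
  have hww : w = w' := by
    funext k
    have hk : (⟨(k:ℕ), Nat.lt_trans k.isLt i.isLt⟩ : Fin t) < i := k.isLt
    have := congrFun h ⟨(k:ℕ), Nat.lt_trans k.isLt i.isLt⟩
    rw [uWord_lt i w x y hk, uWord_lt i w' x y hk] at this
    simpa [Fin.eta] using this
  rw [hww]

lemma uWord_cross {t : ℕ} {x y : Fin n} (hne : x ≠ y) {i i' : Fin t}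
    {w : Fin (i:ℕ) → Fin n} {w' : Fin (i':ℕ) → Fin n}
    (h1 : uWord i w x y = uWord i' w' y x) (h2 : uWord i w y x = uWord i' w' x y) :
    False := by
  rcases lt_trichotomy i i' with hlt | heq | hlt
  · have e1 := congrFun h1 i
    rw [uWord_self, uWord_lt i' w' y x hlt] at e1
    have e2 := congrFun h2 i
    rw [uWord_self, uWord_lt i' w' x y hlt] at e2
    exact hne (e1.trans e2.symm)
  · subst heq
    have e1 := congrFun h1 i
    rw [uWord_self, uWord_self] at e1
    exact hne e1
  · have e1 := congrFun h1 i'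
    rw [uWord_self (t := t) i' w' y x, uWord_lt i w x y hlt] at e1
    have e2 := congrFun h2 i'
    rw [uWord_self (t := t) i' w' x y, uWord_lt i w y x hlt] at e2
    exact hne (e2.symm.trans e1)

lemma fiber_eq_sigma_sum {m : ℕ} {x y : Fin n} (hxy : G.Adj x y) (α : ℝ)
    (f : Sym2 (Fin (m+2) → Fin n) → ℝ)
    (hf : ∀ u v, f s(u, v) = (((sierpinskiGraph G (m+2)).degree u : ℝ)
      * ((sierpinskiGraph G (m+2)).degree v : ℝ)) ^ α) :
    ∑ p ∈ (univ : Finset ((i : Fin (m+2)) × (Fin (i:ℕ) → Fin n))),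
        (((sierpinskiGraph G (m+2)).degree (uWord p.1 p.2 x y) : ℝ)
          * ((sierpinskiGraph G (m+2)).degree (uWord p.1 p.2 y x) : ℝ)) ^ α
      = ∑ e ∈ (sierpinskiGraph G (m+2)).edgeFinset.filter (fun e => Phi e = s(x, y)), f e := by
  refine Finset.sum_bij (fun p _ => s(uWord p.1 p.2 x y, uWord p.1 p.2 y x)) ?_ ?_ ?_ ?_
  · intro p _
    rw [Finset.mem_filter]
    constructor
    · rw [SimpleGraph.mem_edgeFinset, SimpleGraph.mem_edgeSet]
      exact uWord_adj G hxy p.1 p.2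
    · rw [Phi, Sym2.lift_mk]
      exact phiFun_uWord hxy.ne p.1 p.2
  · intro p _ q _ h
    rw [Sym2.eq_iff] at h
    rcases h with ⟨ha, _⟩ | ⟨ha, hb⟩
    · exact uWord_inj hxy.ne ha
    · exact (uWord_cross hxy.ne ha hb).elim
  · intro e he
    induction e with
    | _ u v =>
      rw [Finset.mem_filter, SimpleGraph.mem_edgeFinset, SimpleGraph.mem_edgeSet] at he
      obtain ⟨⟨i, h1, h2, h3, h4⟩, hphi⟩ := he
      rw [Phi, Sym2.lift_mk] at hphi
      have hphi' : phiFun u v = s(x, y) := hphi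
      rw [phiFun_eq h1 h2, Sym2.eq_iff] at hphi'
      set w : Fin (i:ℕ) → Fin n := fun k => u ⟨(k:ℕ), Nat.lt_trans k.isLt i.isLt⟩ with hw
      have hwlt : ∀ (j : Fin (m+2)) (hj : j < i), uWord i w x y j = u j ∧ uWord i w y x j = u j := by
        intro j hj
        rw [uWord_lt i w x y hj, uWord_lt i w y x hj, hw]
        constructor <;> · simp only [Fin.eta]
      rcases hphi' with ⟨hux, hvy⟩ | ⟨huy, hvx⟩
      · refine ⟨⟨i, w⟩, Finset.mem_univ _, ?_⟩
        have h5 : uWord i w x y = u := by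
          funext j
          rcases lt_trichotomy j i with hj | hj | hj
          · exact (hwlt j hj).1
          · rw [hj, uWord_self]; exact hux.symm
          · rw [uWord_gt i w x y hj]
            rw [← hvy]
            exact ((h4 j hj).1).symm
        have h6 : uWord i w y x = v := by
          funext j
          rcases lt_trichotomy j i with hj | hj | hj
          · rw [(hwlt j hj).2]; exact h1 j hj
          · rw [hj, uWord_self]; exact hvy.symm
          · rw [uWord_gt i w y x hj]
            rw [← hux]
            exact ((h4 j hj).2).symm
        show s(uWord i w x y, uWord i w y x) = _
        rw [h5, h6]
      · refine ⟨⟨i, w⟩, Finset.mem_univ _, ?_⟩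
        have h5 : uWord i w x y = v := by
          funext j
          rcases lt_trichotomy j i with hj | hj | hj
          · rw [(hwlt j hj).1]; exact h1 j hj
          · rw [hj, uWord_self]; exact hvx.symm
          · rw [uWord_gt i w x y hj]
            rw [← huy]
            exact ((h4 j hj).2).symm
        have h6 : uWord i w y x = u := by
          funext j
          rcases lt_trichotomy j i with hj | hj | hj
          · exact (hwlt j hj).2
          · rw [hj, uWord_self]; exact huy.symm
          · rw [uWord_gt i w y x hj]
            rw [← hvx]
            exact ((h4 j hj).1).symm
        show s(uWord i w x y, uWord i w y x) = _
        rw [h5, h6, Sym2.eq_swap]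
  · intro p _
    exact (hf _ _).symm


lemma sigma_sum_eq_Wedge {m : ℕ} {x y : Fin n} (hxy : G.Adj x y) (α : ℝ) :
    ∑ p ∈ (univ : Finset ((i : Fin (m+2)) × (Fin (i:ℕ) → Fin n))),
        (((sierpinskiGraph G (m+2)).degree (uWord p.1 p.2 x y) : ℝ)
          * ((sierpinskiGraph G (m+2)).degree (uWord p.1 p.2 y x) : ℝ)) ^ α
      = Wedge G n (m+2) α x y := by
  rw [← Finset.univ_sigma_univ, Finset.sum_sigma]
  rw [Fin.sum_univ_castSucc]
  have hA : ∀ i : Fin (m+1), (∑ w ∈ (univ : Finset (Fin ((Fin.castSucc i : Fin (m+2)):ℕ) → Fin n)),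
      (((sierpinskiGraph G (m+2)).degree (uWord (Fin.castSucc i) w x y) : ℝ)
        * ((sierpinskiGraph G (m+2)).degree (uWord (Fin.castSucc i) w y x) : ℝ)) ^ α)
      = (n:ℝ)^(i:ℕ) * ((((G.degree x : ℝ)) + 1) * (((G.degree y : ℝ)) + 1)) ^ α := by
    intro i
    have hconst : ∀ w ∈ (univ : Finset (Fin ((Fin.castSucc i : Fin (m+2)):ℕ) → Fin n)),
        (((sierpinskiGraph G (m+2)).degree (uWord (Fin.castSucc i) w x y) : ℝ)
          * ((sierpinskiGraph G (m+2)).degree (uWord (Fin.castSucc i) w y x) : ℝ)) ^ α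
        = ((((G.degree x : ℝ)) + 1) * (((G.degree y : ℝ)) + 1)) ^ α := by
      intro w _
      rw [deg_uWord_ne_last G hxy _ (Fin.castSucc_lt_last i).ne w,
        deg_uWord_ne_last G hxy.symm _ (Fin.castSucc_lt_last i).ne w]
      push_cast
      ring_nf
    rw [Finset.sum_congr rfl hconst, Finset.sum_const, nsmul_eq_mul, Finset.card_univ,
      Fintype.card_fun]
    push_cast [Fintype.card_fin]
    rw [Fin.coe_castSucc]
  rw [Finset.sum_congr rfl (fun i _ => hA i), ← Finset.sum_mul]
  have hpsi : ∑ i : Fin (m+1), (n:ℝ)^(i:ℕ) = (psi n (m+1) : ℝ) := by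
    rw [Fin.sum_univ_eq_sum_range (fun i => (n:ℝ)^i) (m+1), psi]
    push_cast
    rfl
  rw [hpsi]
  have hlast : (∑ w ∈ (univ : Finset (Fin ((Fin.last (m+1) : Fin (m+2)):ℕ) → Fin n)),
      (((sierpinskiGraph G (m+2)).degree (uWord (Fin.last (m+1)) w x y) : ℝ)
        * ((sierpinskiGraph G (m+2)).degree (uWord (Fin.last (m+1)) w y x) : ℝ)) ^ α)
      = ∑ w : Fin (m+1) → Fin n,
        (((G.degree x + (if Tail G x w then 1 else 0))
          * (G.degree y + (if Tail G y w then 1 else 0)) : ℕ) : ℝ) ^ α := by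
    apply Finset.sum_congr rfl
    intro w _
    rw [deg_uWord_last G x y w, deg_uWord_last G y x w, Nat.cast_mul]
  rw [hlast, sum_last G x y hxy α]
  rw [Wedge]
  simp only [Nat.add_sub_cancel]
  have r1 : ((G.degree x : ℝ) * (G.degree y : ℝ)) ^ α
      = (G.degree x : ℝ) ^ α * (G.degree y : ℝ) ^ α :=
    Real.mul_rpow (by positivity) (by positivity)
  have r2 : ((G.degree x : ℝ) * ((G.degree y : ℝ) + 1)) ^ α
      = (G.degree x : ℝ) ^ α * ((G.degree y : ℝ) + 1) ^ α :=
    Real.mul_rpow (by positivity) (by positivity)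
  have r3 : (((G.degree x : ℝ) + 1) * (G.degree y : ℝ)) ^ α
      = ((G.degree x : ℝ) + 1) ^ α * (G.degree y : ℝ) ^ α :=
    Real.mul_rpow (by positivity) (by positivity)
  have r4 : (((G.degree x : ℝ) + 1) * ((G.degree y : ℝ) + 1)) ^ α
      = ((G.degree x : ℝ) + 1) ^ α * ((G.degree y : ℝ) + 1) ^ α :=
    Real.mul_rpow (by positivity) (by positivity)
  rw [r1, r2, r3, r4, psi_succ_real]
  push_cast
  ring

end

lemma randic_eq {V : Type*} [Fintype V] [DecidableEq V] (G' : SimpleGraph V)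
    [DecidableRel G'.Adj] (α : ℝ) :
    randic G' α = ∑ e ∈ G'.edgeFinset,
      Sym2.lift ⟨fun u v => ((G'.degree u : ℝ) * (G'.degree v : ℝ)) ^ α,
        fun u v => by dsimp only; rw [mul_comm]⟩ e := by
  rw [randic]
  congr!

theorem randic_sierpinski {n : ℕ} (hn : 2 ≤ n) (G : SimpleGraph (Fin n)) [DecidableRel G.Adj]
    (α : ℝ) (t : ℕ) (ht : 2 ≤ t) :
    randic (sierpinskiGraph G t) α =
      ∑ e ∈ G.edgeFinset, Sym2.lift ⟨Wedge G n t α, Wedge_comm G n t α⟩ e := by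
  obtain ⟨m, rfl⟩ : ∃ m, t = m + 2 := ⟨t - 2, by omega⟩
  classical
  rw [randic_eq]
  refine Eq.trans (Finset.sum_fiberwise_of_maps_to (t := G.edgeFinset) (g := Phi (t := m+1))
    (fun e he => Phi_mem_edgeFinset G he) _).symm ?_
  refine Finset.sum_congr rfl (fun e' he' => ?_)
  revert he'
  induction e' with
  | _ x y =>
    intro he'
    rw [SimpleGraph.mem_edgeFinset, SimpleGraph.mem_edgeSet] at he'
    rw [← fiber_eq_sigma_sum G he' α _ (fun u v => rfl), sigma_sum_eq_Wedge G he' α,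
      Sym2.lift_mk]
end
end
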